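/- There exists a unitary matrix Θ ∈ ℂ^{N_S×N_S} such that rank(H_B·Θ·H_F) = max(rank(H_B) + rank(H_F) − N_S, 0). -/

import Mathlib

open Matrix

lemma aux_finrank_map_add {K M M' : Type*} [Field K] [AddCommGroup M] [Module K M]
    [FiniteDimensional K M] [AddCommGroup M'] [Module K M'] (f : M →ₗ[K] M')
    (W : Submodule K M) :
    Module.finrank K (W.map f) + Module.finrank K (LinearMap.ker f ⊓ W : Submodule K M)
      = Module.finrank K W := by
  have h := LinearMap.finrank_range_add_finrank_ker (f.domRestrict W)
  rw [LinearMap.range_domRestrict, LinearMap.ker_domRestrict] at h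
  rwa [show Submodule.comap W.subtype (LinearMap.ker f)
      = Submodule.comap W.subtype (LinearMap.ker f ⊓ W) by
        simp [Submodule.comap_inf, Submodule.comap_subtype_self],
    (Submodule.comapSubtypeEquivOfLe
      (inf_le_right : LinearMap.ker f ⊓ W ≤ W)).finrank_eq] at h

set_option maxHeartbeats 1000000 in
lemma exists_adapted_onb {N : ℕ} (W : Submodule ℂ (EuclideanSpace ℂ (Fin N))) :
    ∃ b : OrthonormalBasis (Fin N) ℂ (EuclideanSpace ℂ (Fin N)),
      Submodule.span ℂ (b '' {i : Fin N | (i : ℕ) < Module.finrank ℂ W}) = W := by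
  classical
  set d := Module.finrank ℂ W with hd
  have hdN : d ≤ N := by
    have := Submodule.finrank_le W
    simpa [finrank_euclideanSpace_fin] using this
  let bW : OrthonormalBasis (Fin d) ℂ W := (stdOrthonormalBasis ℂ W).reindex (finCongr rfl)
  let v : Fin N → EuclideanSpace ℂ (Fin N) :=
    fun i => if h : (i : ℕ) < d then (bW ⟨i, h⟩ : EuclideanSpace ℂ (Fin N)) else 0
  let s : Set (Fin N) := {i | (i : ℕ) < d}
  have h1 : Orthonormal ℂ (fun j : Fin d => (bW j : EuclideanSpace ℂ (Fin N))) := by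
    rw [orthonormal_iff_ite]
    intro i j
    rw [← Submodule.coe_inner]
    exact orthonormal_iff_ite.mp bW.orthonormal i j
  have hortho : Orthonormal ℂ (s.restrict v) := by
    have h2 := h1.comp (fun i : s => (⟨i.1, i.2⟩ : Fin d))
      (fun i j h => Subtype.ext (Fin.ext (by simpa using congrArg Fin.val h)))
    convert h2 using 1
    funext i
    simp only [Set.restrict_apply, Function.comp_apply, v]
    exact dif_pos (show ((i : Fin N) : ℕ) < d from i.2)
  have hcard : Module.finrank ℂ (EuclideanSpace ℂ (Fin N)) = Fintype.card (Fin N) := by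
    simp [finrank_euclideanSpace_fin]
  obtain ⟨b, hbv⟩ := hortho.exists_orthonormalBasis_extension_of_card_eq hcard
  refine ⟨b, ?_⟩
  have himg : b '' s = Set.range (fun j : Fin d => (bW j : EuclideanSpace ℂ (Fin N))) := by
    ext x
    constructor
    · rintro ⟨i, hi, rfl⟩
      refine ⟨⟨i, hi⟩, ?_⟩
      rw [hbv i hi]
      simp only [v]
      rw [dif_pos (show (i : ℕ) < d from hi)]
    · rintro ⟨j, rfl⟩
      have hjd : (j : ℕ) < d := j.2
      refine ⟨⟨j, lt_of_lt_of_le hjd hdN⟩, hjd, ?_⟩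
      rw [hbv _ hjd]
      simp only [v]
      exact dif_pos (show ((⟨(j : ℕ), lt_of_lt_of_le hjd hdN⟩ : Fin N) : ℕ) < d from hjd)
  rw [himg]
  have hc : (fun j : Fin d => (bW j : EuclideanSpace ℂ (Fin N))) = W.subtype ∘ bW := rfl
  rw [hc, Set.range_comp, Submodule.span_image]
  have hspanW : Submodule.span ℂ (Set.range bW) = ⊤ := by
    rw [← bW.coe_toBasis]; exact bW.toBasis.span_eq
  rw [hspanW, Submodule.map_subtype_top]

set_option maxHeartbeats 1000000 in
lemma exists_adapted_unitary {N : ℕ} (W : Submodule ℂ (Fin N → ℂ)) :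
    ∃ B : Matrix (Fin N) (Fin N) ℂ, Bᴴ * B = 1 ∧
      Submodule.span ℂ ((fun j => fun i => B i j) ''
        {j : Fin N | (j : ℕ) < Module.finrank ℂ W}) = W := by
  obtain ⟨b, hb⟩ := exists_adapted_onb (N := N) (W.map ((EuclideanSpace.equiv (Fin N) ℂ).toLinearEquiv.symm.toLinearMap))
  rw [LinearEquiv.finrank_map_eq] at hb
  refine ⟨Matrix.of fun i j => b j i, ?_, ?_⟩
  · ext j k
    have h3 := orthonormal_iff_ite.mp b.orthonormal j k
    simp only [PiLp.inner_apply, RCLike.inner_apply] at h3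
    simpa [Matrix.mul_apply, Matrix.conjTranspose_apply, Matrix.one_apply, mul_comm] using h3
  · have hb' := congrArg (Submodule.map (EuclideanSpace.equiv (Fin N) ℂ).toLinearEquiv.toLinearMap) hb
    rw [Submodule.map_span, ← Set.image_comp, ← Submodule.map_comp, LinearEquiv.comp_symm, Submodule.map_id] at hb'
    exact hb'

set_option maxHeartbeats 1000000 in
theorem stmt2 {N_R N_S N_T : ℕ}
    (H_B : Matrix (Fin N_R) (Fin N_S) ℂ) (H_F : Matrix (Fin N_S) (Fin N_T) ℂ) :
    ∃ Θ : Matrix (Fin N_S) (Fin N_S) ℂ, Θᴴ * Θ = 1 ∧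
      (H_B * Θ * H_F).rank = H_B.rank + H_F.rank - N_S := by
  classical
  set f := H_B.mulVecLin with hf
  set K : Submodule ℂ (Fin N_S → ℂ) := LinearMap.ker f with hK
  set R : Submodule ℂ (Fin N_S → ℂ) := LinearMap.range H_F.mulVecLin with hR
  obtain ⟨B, hB, hBspan⟩ := exists_adapted_unitary K
  obtain ⟨C, hC, hCspan⟩ := exists_adapted_unitary R
  set r := H_B.rank with hr
  set s := H_F.rank with hs
  set d := Module.finrank ℂ K with hdK
  -- rank-nullity for H_B
  have hrd : r + d = N_S := by
    have := LinearMap.finrank_range_add_finrank_ker f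
    rwa [Module.finrank_fin_fun] at this
  have hRs : Module.finrank ℂ R = s := rfl
  -- the unitary
  refine ⟨B * Cᴴ, ?_, ?_⟩
  · have hBB : B * Bᴴ = 1 := mul_eq_one_comm.mp hB
    have hCC : C * Cᴴ = 1 := mul_eq_one_comm.mp hC
    calc (B * Cᴴ)ᴴ * (B * Cᴴ) = C * (Bᴴ * B) * Cᴴ := by
          simp [Matrix.conjTranspose_mul, Matrix.mul_assoc]
      _ = 1 := by rw [hB, Matrix.mul_one, hCC]
  · set Θ := B * Cᴴ with hΘ
    have hΘunit : IsUnit Θ.det := by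
      have hBB : B * Bᴴ = 1 := mul_eq_one_comm.mp hB
      have : Θ * (C * Bᴴ) = 1 := by
        rw [hΘ]
        calc B * Cᴴ * (C * Bᴴ) = B * (Cᴴ * C) * Bᴴ := by rw [Matrix.mul_assoc, Matrix.mul_assoc,
              Matrix.mul_assoc]
        _ = 1 := by rw [hC, Matrix.mul_one, hBB]
      exact Matrix.isUnit_det_of_right_inverse this
    set θ := Θ.mulVecLin with hθ
    -- Θ maps column j of C to column j of B
    have hcol : ∀ j : Fin N_S, θ (fun i => C i j) = fun i => B i j := by
      intro j
      have h1 : (fun i => C i j) = C *ᵥ Pi.single j 1 := by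
        funext i; simp [Matrix.mulVec_single]
      rw [h1]
      show Θ *ᵥ (C *ᵥ Pi.single j 1) = _
      rw [Matrix.mulVec_mulVec, hΘ, Matrix.mul_assoc, hC, Matrix.mul_one]
      funext i; simp [Matrix.mulVec_single]
    -- image of R under θ
    set Rd : Submodule ℂ (Fin N_S → ℂ) :=
      Submodule.span ℂ ((fun j => fun i => B i j) '' {j : Fin N_S | (j : ℕ) < s}) with hRd
    have hmapR : Submodule.map θ R = Rd := by
      rw [← hCspan, Submodule.map_span, ← Set.image_comp]
      congr 1
      refine Set.image_congr fun j _ => ?_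
      exact hcol j
    -- rank of the product
    have hrankprod : (H_B * Θ * H_F).rank
        = Module.finrank ℂ (Submodule.map f Rd) := by
      show Module.finrank ℂ (LinearMap.range (H_B * Θ * H_F).mulVecLin) = _
      rw [Matrix.mulVecLin_mul, Matrix.mulVecLin_mul, LinearMap.range_comp,
        Submodule.map_comp, ← hR, ← hθ, ← hf, hmapR]
    have hfinRd : Module.finrank ℂ Rd = s := by
      rw [← hmapR]
      have : Submodule.map θ R = LinearMap.range (Θ * H_F).mulVecLin := by
        rw [Matrix.mulVecLin_mul, LinearMap.range_comp, hR, hθ]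
      rw [this]
      have := Matrix.rank_mul_eq_right_of_isUnit_det Θ H_F hΘunit
      exact this
    rcases le_or_gt s d with hsd | hds
    · -- Rd ≤ K, product rank is 0
      have hRdK : Rd ≤ K := by
        rw [hRd, ← hBspan]
        exact Submodule.span_mono (Set.image_mono fun j hj => lt_of_lt_of_le hj hsd)
      have hbot : Submodule.map f Rd = ⊥ := by
        rw [← le_bot_iff, Submodule.map_le_iff_le_comap]
        intro x hx
        exact hRdK hx
      rw [hrankprod, hbot, finrank_bot]
      omega
    · -- K ≤ Rd
      have hKRd : K ≤ Rd := by
        rw [hRd, ← hBspan]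
        exact Submodule.span_mono (Set.image_mono fun j hj => lt_of_lt_of_le hj hds.le)
      have haux := aux_finrank_map_add f Rd
      have hinf : LinearMap.ker f ⊓ Rd = K := by
        rw [← hK]; exact inf_eq_left.mpr hKRd
      rw [hinf, hfinRd, ← hdK] at haux
      rw [hrankprod]
      omega
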